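/- Let G be a group of order n and let S' = {D₁, …, D_m} be a collection of m pairwise disjoint k-subsets of G* with S = ⋃ᵢ Dᵢ. If S' is simultaneously an (n, m, k, λ*, μ*)-disjoint partial difference family and an (n, m, k, λ, μ)-external partial difference family, then S is an (n, mk, λ+λ*, μ+μ*)-partial difference set when λ+λ* ≠ μ+μ*, and S is an (n, mk, σ)-difference set when λ+λ* = μ+μ* = σ. -/
import Mathlib


open Finset

section Defs

variable {G : Type*} [AddGroup G] [DecidableEq G]

/-- The multiset of internal differences `x - y` (`x ≠ y`) of a finset. -/
def intDiff (D : Finset G) : Multiset G :=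
  ((D ×ˢ D).filter fun p => p.1 ≠ p.2).val.map fun p => p.1 - p.2

/-- The multiset of external differences `x - y`, `x ∈ D₁`, `y ∈ D₂`. -/
def extDiff (D₁ D₂ : Finset G) : Multiset G :=
  (D₁ ×ˢ D₂).val.map fun p => p.1 - p.2

variable {ι : Type*} [Fintype ι] [DecidableEq ι]

/-- The multiset of all internal differences of a family of sets. -/
def famInt (D : ι → Finset G) : Multiset G := ∑ i, intDiff (D i)

/-- The multiset of all external differences between distinct members of a family of sets. -/
def famExt (D : ι → Finset G) : Multiset G :=
  ∑ i, ∑ j, if j = i then 0 else extDiff (D i) (D j)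

/-- The union of the members of a family of sets. -/
def famU (D : ι → Finset G) : Finset G := Finset.univ.biUnion D

variable [Fintype G]

/-- `D` is an `(n,k,λ)`-difference set: `Δ(D) = λ(G*)`. -/
def IsDS (n k : ℕ) (lam : ℤ) (D : Finset G) : Prop :=
  Fintype.card G = n ∧ D.card = k ∧
    ∀ x : G, ((intDiff D).count x : ℤ) = if x = 0 then 0 else lam

/-- `P` is an `(n,k,λ,μ)`-partial difference set: `Δ(P) = λ(P) + μ(G* \ P)`. -/
def IsPDS (n k : ℕ) (lam mu : ℤ) (P : Finset G) : Prop :=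
  Fintype.card G = n ∧ P.card = k ∧
    ∀ x : G, ((intDiff P).count x : ℤ) =
      if x ∈ P then lam else if x = 0 then 0 else mu

/-- `D` is a family of `m` pairwise disjoint `k`-subsets of a group of order `n`. -/
def FamShape (n m k : ℕ) (D : ι → Finset G) : Prop :=
  Fintype.card G = n ∧ Fintype.card ι = m ∧ (∀ i, (D i).card = k) ∧
    ∀ i j, i ≠ j → Disjoint (D i) (D j)

/-- `(n,m,k,λ)`-disjoint difference family: `⋃ᵢ Δ(Dᵢ) = λ(G*)`. -/
def IsDDF (n m k : ℕ) (lam : ℤ) (D : ι → Finset G) : Prop :=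
  FamShape n m k D ∧
    ∀ x : G, ((famInt D).count x : ℤ) = if x = 0 then 0 else lam

/-- `(n,m,k,λ)`-external difference family: `⋃_{i≠j} Δ(Dᵢ,Dⱼ) = λ(G*)`. -/
def IsEDF (n m k : ℕ) (lam : ℤ) (D : ι → Finset G) : Prop :=
  FamShape n m k D ∧
    ∀ x : G, ((famExt D).count x : ℤ) = if x = 0 then 0 else lam

/-- `(n,m,k,λ,μ)`-disjoint partial difference family:
sets in `G*`, `⋃ᵢ Δ(Dᵢ) = λ(S) + μ(G* \ S)` where `S = ⋃ᵢ Dᵢ`. -/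
def IsDPDF (n m k : ℕ) (lam mu : ℤ) (D : ι → Finset G) : Prop :=
  FamShape n m k D ∧ (∀ i, (0 : G) ∉ D i) ∧
    ∀ x : G, ((famInt D).count x : ℤ) =
      if x ∈ famU D then lam else if x = 0 then 0 else mu

/-- `(n,m,k,λ,μ)`-external partial difference family:
sets in `G*`, `⋃_{i≠j} Δ(Dᵢ,Dⱼ) = λ(S) + μ(G* \ S)` where `S = ⋃ᵢ Dᵢ`. -/
def IsEPDF (n m k : ℕ) (lam mu : ℤ) (D : ι → Finset G) : Prop :=
  FamShape n m k D ∧ (∀ i, (0 : G) ∉ D i) ∧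
    ∀ x : G, ((famExt D).count x : ℤ) =
      if x ∈ famU D then lam else if x = 0 then 0 else mu

end Defs

section FieldDefs

variable {F : Type*} [Field F] [DecidableEq F]

/-- `α` is a primitive element: every nonzero element is a power of `α`. -/
def IsPrimitiveElt (α : F) : Prop := ∀ x : F, x ≠ 0 → ∃ k : ℕ, x = α ^ k

/-- The coset `α^i⟨α^e⟩` of the cyclotomic class of order `e` (of size `f`). -/
def cyclo (α : F) (e f i : ℕ) : Finset F :=
  (Finset.range f).image fun j => α ^ (i + e * j)

/-- The cyclotomic number `(i,j)_e`: the number of pairs `(zᵢ, zⱼ) ∈ Cᵢ × Cⱼ` with `zᵢ + 1 = zⱼ`. -/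
def cycNum (α : F) (e f i j : ℕ) : ℕ :=
  ((cyclo α e f i ×ˢ cyclo α e f j).filter fun p => p.1 + 1 = p.2).card

/-- `Φᵢ = {x ∈ C₀^e : x ≠ 1, x - 1 ∈ α^i C₀^ε}`. -/
def Phi (α : F) (e f ε ρ i : ℕ) : Finset F :=
  (cyclo α e f 0).filter fun x => x ≠ 1 ∧ x - 1 ∈ cyclo α ε ρ i

/-- `φᵢ = |Φᵢ|`. -/
def phi (α : F) (e f ε ρ i : ℕ) : ℕ := (Phi α e f ε ρ i).card

end FieldDefs

section Aux

variable {G : Type*} [AddGroup G] [DecidableEq G]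

lemma count_intDiff (D : Finset G) (x : G) :
    (intDiff D).count x =
      ((D ×ˢ D).filter fun p => p.1 ≠ p.2 ∧ x = p.1 - p.2).card := by
  rw [intDiff, Multiset.count_map, ← Finset.filter_val, Finset.filter_filter]
  rfl

lemma count_extDiff (D₁ D₂ : Finset G) (x : G) :
    (extDiff D₁ D₂).count x =
      ((D₁ ×ˢ D₂).filter fun p => x = p.1 - p.2).card := by
  rw [extDiff, Multiset.count_map, ← Finset.filter_val]
  rfl

variable {ι : Type*} [Fintype ι] [DecidableEq ι]

lemma count_union_split (D : ι → Finset G)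
    (hdisj : ∀ i j, i ≠ j → Disjoint (D i) (D j)) (x : G) :
    (intDiff (famU D)).count x = (famInt D).count x + (famExt D).count x := by
  have hbi : ((famU D ×ˢ famU D).filter fun p => p.1 ≠ p.2 ∧ x = p.1 - p.2)
      = (Finset.univ : Finset (ι × ι)).biUnion
          (fun q => (D q.1 ×ˢ D q.2).filter fun p => p.1 ≠ p.2 ∧ x = p.1 - p.2) := by
    ext p
    simp only [Finset.mem_filter, Finset.mem_product, Finset.mem_biUnion, Finset.mem_univ,
      famU, true_and, Prod.exists]
    aesop
  have hpairdisj : ∀ q ∈ (Finset.univ : Finset (ι × ι)), ∀ q' ∈ Finset.univ, q ≠ q' →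
      Disjoint ((D q.1 ×ˢ D q.2).filter fun p => p.1 ≠ p.2 ∧ x = p.1 - p.2)
        ((D q'.1 ×ˢ D q'.2).filter fun p => p.1 ≠ p.2 ∧ x = p.1 - p.2) := by
    intro q _ q' _ hq
    rw [Finset.disjoint_left]
    intro p hp hp'
    simp only [Finset.mem_filter, Finset.mem_product] at hp hp'
    rcases eq_or_ne q.1 q'.1 with h1 | h1
    · have h2 : q.2 ≠ q'.2 := fun h2 => hq (Prod.ext h1 h2)
      exact (Finset.disjoint_left.mp (hdisj _ _ h2) hp.1.2 hp'.1.2)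
    · exact (Finset.disjoint_left.mp (hdisj _ _ h1) hp.1.1 hp'.1.1)
  have hcard : (intDiff (famU D)).count x
      = ∑ i : ι, ∑ j : ι,
          ((D i ×ˢ D j).filter fun p => p.1 ≠ p.2 ∧ x = p.1 - p.2).card := by
    rw [count_intDiff, hbi, Finset.card_biUnion hpairdisj, ← Finset.sum_product']
    rfl
  have hint : (famInt D).count x
      = ∑ i : ι, ((D i ×ˢ D i).filter fun p => p.1 ≠ p.2 ∧ x = p.1 - p.2).card := by
    rw [famInt, Multiset.count_sum']
    exact Finset.sum_congr rfl fun i _ => count_intDiff _ _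
  have hext : (famExt D).count x
      = ∑ i : ι, ∑ j : ι, if j = i then 0 else
          ((D i ×ˢ D j).filter fun p => p.1 ≠ p.2 ∧ x = p.1 - p.2).card := by
    rw [famExt, Multiset.count_sum']
    refine Finset.sum_congr rfl fun i _ => ?_
    rw [Multiset.count_sum']
    refine Finset.sum_congr rfl fun j _ => ?_
    split_ifs with h
    · simp
    · rw [count_extDiff]
      congr 1
      refine Finset.filter_congr fun p hp => ?_
      simp only [Finset.mem_product] at hp
      have : p.1 ≠ p.2 := fun he =>
        (Finset.disjoint_left.mp (hdisj i j (Ne.symm h)) hp.1) (he ▸ hp.2)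
      simp [this]
  rw [hcard, hint, hext, ← Finset.sum_add_distrib]
  refine Finset.sum_congr rfl fun i _ => ?_
  have : ∀ j : ι, ((D i ×ˢ D j).filter fun p => p.1 ≠ p.2 ∧ x = p.1 - p.2).card
      = (if j = i then ((D i ×ˢ D i).filter fun p => p.1 ≠ p.2 ∧ x = p.1 - p.2).card else 0)
        + (if j = i then 0 else
            ((D i ×ˢ D j).filter fun p => p.1 ≠ p.2 ∧ x = p.1 - p.2).card) := by
    intro j; split_ifs with h <;> simp [h]
  rw [Finset.sum_congr rfl fun j _ => this j, Finset.sum_add_distrib, Finset.sum_ite_eq']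
  simp

end Aux

/-- Theorem: if a family of `m` pairwise disjoint `k`-subsets of `G*` is simultaneously an
`(n,m,k,λ*,μ*)`-DPDF and an `(n,m,k,λ,μ)`-EPDF, then its union `S` is an
`(n,m*k,λ+λ*,μ+μ*)`-PDS when `λ+λ* ≠ μ+μ*`, and an `(n,m*k,σ)`-DS when `λ+λ* = μ+μ* = σ`. -/
theorem dpdf_and_epdf_union_pds {G : Type*} [AddGroup G] [DecidableEq G] [Fintype G]
    (n m k : ℕ) (lamStar muStar lam mu : ℤ) (D : Fin m → Finset G)
    (hDPDF : IsDPDF n m k lamStar muStar D)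
    (hEPDF : IsEPDF n m k lam mu D) :
    (lam + lamStar ≠ mu + muStar → IsPDS n (m * k) (lam + lamStar) (mu + muStar) (famU D)) ∧
    (lam + lamStar = mu + muStar → IsDS n (m * k) (lam + lamStar) (famU D)) := by
  obtain ⟨⟨hn, _, hk, hdisj⟩, h0, hIntCount⟩ := hDPDF
  obtain ⟨_, _, hExtCount⟩ := hEPDF
  have h0S : (0 : G) ∉ famU D := by
    simp only [famU, Finset.mem_biUnion, Finset.mem_univ, true_and, not_exists]
    exact h0
  have hcardS : (famU D).card = m * k := by
    rw [famU, Finset.card_biUnion (fun i _ j _ h => hdisj i j h)]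
    simp [hk, Finset.card_univ, mul_comm]
  have hcount : ∀ x : G, ((intDiff (famU D)).count x : ℤ) =
      if x ∈ famU D then lam + lamStar else if x = 0 then 0 else mu + muStar := by
    intro x
    rw [count_union_split D hdisj x]
    push_cast
    rw [hIntCount x, hExtCount x]
    split_ifs <;> ring
  refine ⟨fun _ => ⟨hn, hcardS, hcount⟩, fun heq => ⟨hn, hcardS, fun x => ?_⟩⟩
  rw [hcount x]
  split_ifs with h1 h2 h2
  · exact absurd (h2 ▸ h1) h0S
  · rfl
  · rfl
  · exact heq.symm
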